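/- Fix β > 0. There exists a function ρ₂ : (0, 1/2) → ℝ with ρ₂(δ)/δ^{1+2β} → 0 as δ → 0⁺ such that for every δ ∈ (0, 1/2) and every ξ ∈ ℝ with δ^{1+β}/(4π) < |ξ| < δ/(4π), one has |g_δ(ξ)| ≤ 1 − δ^{1+2β}/16 + ρ₂(δ). -/

import Mathlib

open MeasureTheory Real Set Filter

noncomputable section

/-- The centered Gaussian density `M_a(v) = e^{-v²/(2a)}/√(2πa)` with variance `a`. -/
def gaussM (a v : ℝ) : ℝ := Real.exp (-v ^ 2 / (2 * a)) / Real.sqrt (2 * π * a)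

/-- `f_δ = δ M_{1/(2δ)} + (1-δ) M_{1/(2(1-δ))}`. -/
def fdel (δ v : ℝ) : ℝ :=
  δ * gaussM (1 / (2 * δ)) v + (1 - δ) * gaussM (1 / (2 * (1 - δ))) v

/-- `h_δ(u) = f_δ(√u)/√u` (for `u > 0`). -/
def hdel (δ u : ℝ) : ℝ := fdel δ (Real.sqrt u) / Real.sqrt u

/-- `g_δ(ξ) = ∫_0^∞ h_δ(u) e^{-2πiξu} du`, the Fourier transform of `h_δ`. -/
def gdel (δ ξ : ℝ) : ℂ :=
  ∫ u in Ioi (0 : ℝ),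
    (hdel δ u : ℂ) * Complex.exp (-(2 : ℂ) * (π : ℂ) * Complex.I * (ξ : ℂ) * (u : ℂ))

/-- The elementary kernel `e^{-cu}/√u · e^{-2πiξu}`. -/
def gker (c ξ : ℝ) (u : ℝ) : ℂ :=
  ((Real.exp (-(c*u)) / Real.sqrt u : ℝ) : ℂ) *
    Complex.exp (-(2:ℂ)*(π:ℂ)*Complex.I*(ξ:ℂ)*(u:ℂ))

lemma gker_norm_eq {c : ℝ} (ξ : ℝ) {u : ℝ} (hu : 0 < u) :
    ‖gker c ξ u‖ = u ^ (-(1/2):ℝ) * Real.exp (-c * u ^ (1:ℝ)) := by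
  have h1 : (-(2:ℂ)*(π:ℂ)*Complex.I*(ξ:ℂ)*(u:ℂ)) = ((-(2*π*ξ*u) : ℝ) : ℂ) * Complex.I := by
    push_cast; ring
  rw [gker, norm_mul, h1,
    Complex.norm_exp_ofReal_mul_I, mul_one, Complex.norm_real, Real.norm_eq_abs,
    abs_of_nonneg (by positivity), Real.rpow_one, Real.rpow_neg hu.le, Real.sqrt_eq_rpow,
    div_eq_mul_inv, mul_comm, neg_mul]

lemma gker_integrable {c : ℝ} (hc : 0 < c) (ξ : ℝ) :
    IntegrableOn (gker c ξ) (Ioi 0) := by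
  have hmaj := integrableOn_rpow_mul_exp_neg_mul_rpow (p:=1) (s:=-(1/2)) (by norm_num) one_pos hc
  refine Integrable.mono' hmaj ?_ ?_
  · apply Measurable.aestronglyMeasurable
    unfold gker
    fun_prop
  · filter_upwards [ae_restrict_mem measurableSet_Ioi] with u hu
    rw [gker_norm_eq ξ hu]

lemma gker_integral {c : ℝ} (hc : 0 < c) (ξ : ℝ) :
    ∫ u in Ioi (0:ℝ), gker c ξ u
      = ((π:ℂ)/((c:ℂ)+2*(π:ℂ)*Complex.I*(ξ:ℂ)))^(1/2:ℂ) := by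
  set b : ℂ := (c:ℂ)+2*(π:ℂ)*Complex.I*(ξ:ℂ) with hb
  have hbre : 0 < b.re := by simp [hb, hc]
  have h2 := integral_comp_rpow_Ioi_of_pos (g := gker c ξ) (p := 2) two_pos
  have h3 : ∀ x ∈ Ioi (0:ℝ), ((2:ℝ) * x ^ ((2:ℝ) - 1)) • gker c ξ (x ^ (2:ℝ))
      = (2:ℂ) * Complex.exp (-b * (x:ℂ)^2) := by
    intro x hx
    have hx0 : (0:ℝ) < x := hx
    have hxc : (x:ℂ) ≠ 0 := by exact_mod_cast hx0.ne'
    have hx2 : x ^ ((2:ℝ)) = x ^ (2:ℕ) := by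
      rw [show ((2:ℝ)) = ((2:ℕ):ℝ) by norm_num, Real.rpow_natCast]
    have hx1 : x ^ ((2:ℝ) - 1) = x := by norm_num
    rw [gker, hx2, hx1, Real.sqrt_sq hx0.le]
    rw [Complex.real_smul]
    have : -b * (x:ℂ)^2 = ((-(c*x^2) : ℝ) : ℂ) + (-(2:ℂ)*(π:ℂ)*Complex.I*(ξ:ℂ)*((x^2:ℝ):ℂ)) := by
      rw [hb]; push_cast; ring
    rw [this, Complex.exp_add, ← Complex.ofReal_exp]
    push_cast
    field_simp [hxc]
  rw [← h2, setIntegral_congr_fun measurableSet_Ioi h3, integral_const_mul,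
    integral_gaussian_complex_Ioi hbre]
  ring

lemma gker_norm_int {c : ℝ} (hc : 0 < c) (ξ : ℝ) :
    ‖∫ u in Ioi (0:ℝ), gker c ξ u‖ = Real.sqrt (π / Real.sqrt (c^2 + (2*π*ξ)^2)) := by
  rw [gker_integral hc ξ]
  set b : ℂ := (c:ℂ)+2*(π:ℂ)*Complex.I*(ξ:ℂ) with hbdef
  have hbre : b.re = c := by simp [hbdef]
  have hbim : b.im = 2*π*ξ := by simp [hbdef]
  have hb0 : b ≠ 0 := by
    intro h
    rw [h] at hbre
    simp at hbre
    exact hc.ne' hbre.symm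
  have habs : ‖b‖ = Real.sqrt (c^2+(2*π*ξ)^2) := by
    rw [Complex.norm_def, Complex.normSq_apply, hbre, hbim]
    congr 1; ring
  have hπb : (π:ℂ)/b ≠ 0 := div_ne_zero (by exact_mod_cast Real.pi_ne_zero) hb0
  rw [show ((1/2:ℂ)) = Complex.ofReal (1/2) by norm_num]
  rw [Complex.norm_cpow_of_ne_zero hπb, Complex.ofReal_im,
    Complex.ofReal_re, mul_zero, Real.exp_zero, div_one, norm_div, Complex.norm_real, Real.norm_eq_abs,
    abs_of_pos pi_pos, habs]
  exact (Real.sqrt_eq_rpow _).symm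

lemma gaussM_sqrt {c u : ℝ} (hc : c ≠ 0) (hu : 0 ≤ u) :
    gaussM (1/(2*c)) (Real.sqrt u) = Real.exp (-(c*u)) / Real.sqrt (π/c) := by
  rw [gaussM, Real.sq_sqrt hu]
  congr 2
  · field_simp
  · field_simp

lemma hdel_eq {δ u : ℝ} (hδ0 : δ ≠ 0) (hδ1 : (1:ℝ) - δ ≠ 0) (hu : 0 ≤ u) :
    hdel δ u = (δ / Real.sqrt (π/δ)) * (Real.exp (-(δ*u))/Real.sqrt u)
      + ((1-δ) / Real.sqrt (π/(1-δ))) * (Real.exp (-((1-δ)*u))/Real.sqrt u) := by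
  rw [hdel, fdel, gaussM_sqrt hδ0 hu, gaussM_sqrt hδ1 hu]
  ring

lemma gdel_eq {δ : ℝ} (hδ0 : 0 < δ) (hδ1 : δ < 1) (ξ : ℝ) :
    gdel δ ξ = ((δ / Real.sqrt (π/δ) : ℝ) : ℂ) * (∫ u in Ioi (0:ℝ), gker δ ξ u)
      + (((1-δ) / Real.sqrt (π/(1-δ)) : ℝ) : ℂ) * (∫ u in Ioi (0:ℝ), gker (1-δ) ξ u) := by
  have h1δ : 0 < 1 - δ := by linarith
  rw [gdel, ← integral_const_mul, ← integral_const_mul,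
    ← integral_add ((gker_integrable hδ0 ξ).const_mul _) ((gker_integrable h1δ ξ).const_mul _)]
  refine setIntegral_congr_fun measurableSet_Ioi fun u hu => ?_
  have hu0 : (0:ℝ) < u := hu
  rw [hdel_eq hδ0.ne' h1δ.ne' hu0.le, gker, gker]
  push_cast
  ring

lemma gdel_norm_le {δ : ℝ} (hδ0 : 0 < δ) (hδ1 : δ < 1) (ξ : ℝ) :
    ‖gdel δ ξ‖ ≤ δ * Real.sqrt δ / Real.sqrt (Real.sqrt (δ^2+(2*π*ξ)^2)) + (1-δ) := by
  have h1δ : 0 < 1 - δ := by linarith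
  have hK1 : (0:ℝ) < δ^2+(2*π*ξ)^2 := by positivity
  have hK2 : (0:ℝ) < (1-δ)^2+(2*π*ξ)^2 := by positivity
  have hsπ : Real.sqrt π ≠ 0 := by positivity
  rw [gdel_eq hδ0 hδ1 ξ]
  refine (norm_add_le _ _).trans ?_
  rw [norm_mul, norm_mul, gker_norm_int hδ0, gker_norm_int h1δ, Complex.norm_real,
    Complex.norm_real, Real.norm_eq_abs, Real.norm_eq_abs,
    abs_of_nonneg (by positivity), abs_of_nonneg (by positivity)]
  have e1 : δ / Real.sqrt (π/δ) * Real.sqrt (π / Real.sqrt (δ^2+(2*π*ξ)^2))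
      = δ * Real.sqrt δ / Real.sqrt (Real.sqrt (δ^2+(2*π*ξ)^2)) := by
    rw [Real.sqrt_div pi_pos.le, Real.sqrt_div pi_pos.le]
    have h1 : Real.sqrt (Real.sqrt (δ^2+(2*π*ξ)^2)) ≠ 0 := by positivity
    field_simp
  have e2 : (1-δ) / Real.sqrt (π/(1-δ)) * Real.sqrt (π / Real.sqrt ((1-δ)^2+(2*π*ξ)^2))
      ≤ 1 - δ := by
    rw [Real.sqrt_div pi_pos.le, Real.sqrt_div pi_pos.le]
    have h2 : Real.sqrt (1-δ) ≤ Real.sqrt (Real.sqrt ((1-δ)^2+(2*π*ξ)^2)) := by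
      apply Real.sqrt_le_sqrt
      calc 1 - δ = Real.sqrt ((1-δ)^2) := (Real.sqrt_sq h1δ.le).symm
        _ ≤ _ := Real.sqrt_le_sqrt (by nlinarith [sq_nonneg (2*π*ξ)])
    have h3 : (0:ℝ) < Real.sqrt (1-δ) := Real.sqrt_pos.2 h1δ
    have h4 : (0:ℝ) < Real.sqrt (Real.sqrt ((1-δ)^2+(2*π*ξ)^2)) := by positivity
    have e2' : (1-δ)/(Real.sqrt π/Real.sqrt (1-δ)) * (Real.sqrt π/Real.sqrt (Real.sqrt ((1-δ)^2+(2*π*ξ)^2)))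
        = (1-δ) * (Real.sqrt (1-δ)/Real.sqrt (Real.sqrt ((1-δ)^2+(2*π*ξ)^2))) := by
      field_simp
    rw [e2']
    exact mul_le_of_le_one_right h1δ.le ((div_le_one h4).2 h2)
  rw [e1]
  linarith [e2]

lemma term1_le {δ s : ℝ} (hδ0 : 0 < δ) :
    δ * Real.sqrt δ / Real.sqrt (Real.sqrt (δ^2+s^2))
      ≤ δ * (1 - (s^2/δ^2)/4 + 3*(s^2/δ^2)^2/16) := by
  set t := s^2/δ^2 with htdef
  have ht0 : 0 ≤ t := by positivity
  have hq : (0:ℝ) < 1 - t/4 + 3*t^2/16 := by nlinarith [sq_nonneg (t - 2/3)]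
  have hp : (0:ℝ) < 1 - t/2 + 3*t^2/8 := by nlinarith [sq_nonneg (t - 2/3)]
  have hqp : 1 - t/2 + 3*t^2/8 ≤ (1 - t/4 + 3*t^2/16)^2 := by
    nlinarith [sq_nonneg (t*(4 - 3*t))]
  have hC : (1:ℝ) ≤ (1+t) * (1 - t/2 + 3*t^2/8)^2 := by
    nlinarith [mul_nonneg (pow_nonneg ht0 3) (sq_nonneg (t - 5/6)), pow_nonneg ht0 3]
  have hs2 : δ^2 + s^2 = δ^2*(1+t) := by rw [htdef]; field_simp
  have hK : Real.sqrt (δ^2+s^2) = δ * Real.sqrt (1+t) := by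
    rw [hs2, Real.sqrt_mul (sq_nonneg δ), Real.sqrt_sq hδ0.le]
  have hsq : (1:ℝ) ≤ Real.sqrt (1+t) * (1 - t/2 + 3*t^2/8) := by
    calc (1:ℝ) = Real.sqrt 1 := Real.sqrt_one.symm
      _ ≤ Real.sqrt ((1+t)*(1 - t/2 + 3*t^2/8)^2) := Real.sqrt_le_sqrt hC
      _ = Real.sqrt (1+t) * (1 - t/2 + 3*t^2/8) := by
        rw [Real.sqrt_mul (by positivity), Real.sqrt_sq hp.le]
  have hK0 : (0:ℝ) < Real.sqrt (δ^2+s^2) := Real.sqrt_pos.2 (by positivity)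
  have hKey : δ ≤ Real.sqrt (δ^2+s^2) * (1 - t/4 + 3*t^2/16)^2 := by
    rw [hK]
    have h1t : (0:ℝ) ≤ Real.sqrt (1+t) := Real.sqrt_nonneg _
    nlinarith [mul_le_mul_of_nonneg_left hqp h1t]
  have hmain : Real.sqrt δ / Real.sqrt (Real.sqrt (δ^2+s^2)) ≤ 1 - t/4 + 3*t^2/16 := by
    rw [← Real.sqrt_div hδ0.le]
    calc Real.sqrt (δ / Real.sqrt (δ^2+s^2))
        ≤ Real.sqrt ((1 - t/4 + 3*t^2/16)^2) := by
          apply Real.sqrt_le_sqrt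
          rw [div_le_iff₀ hK0]
          linarith [hKey]
      _ = 1 - t/4 + 3*t^2/16 := Real.sqrt_sq hq.le
  calc δ * Real.sqrt δ / Real.sqrt (Real.sqrt (δ^2+s^2))
      = δ * (Real.sqrt δ / Real.sqrt (Real.sqrt (δ^2+s^2))) := by ring
    _ ≤ δ * (1 - t/4 + 3*t^2/16) := mul_le_mul_of_nonneg_left hmain hδ0.le

/-- Decay bound on `g_δ` in the intermediate region `δ^{1+β}/(4π) < |ξ| < δ/(4π)`. -/
theorem gdel_decay_intermediate (β : ℝ) (hβ : 0 < β) :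
    ∃ ρ₂ : ℝ → ℝ,
      Tendsto (fun δ => ρ₂ δ / δ ^ (1 + 2 * β)) (nhdsWithin 0 (Ioi 0)) (nhds 0) ∧
      ∀ δ ∈ Ioo (0 : ℝ) (1 / 2), ∀ ξ : ℝ,
        δ ^ (1 + β) / (4 * π) < |ξ| → |ξ| < δ / (4 * π) →
          ‖gdel δ ξ‖ ≤ 1 - δ ^ (1 + 2 * β) / 16 + ρ₂ δ := by
  refine ⟨fun δ => 3/64 * δ ^ (1 + 3*β), ?_, ?_⟩
  · have hc : ContinuousAt (fun x:ℝ => x ^ β) 0 :=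
      Real.continuousAt_rpow_const 0 β (Or.inr hβ.le)
    have h0 : Tendsto (fun x:ℝ => x ^ β) (nhdsWithin 0 (Ioi 0)) (nhds 0) := by
      have h0' := hc.tendsto
      rw [Real.zero_rpow hβ.ne'] at h0'
      exact h0'.mono_left nhdsWithin_le_nhds
    have h1 : Tendsto (fun δ:ℝ => 3/64 * δ ^ β) (nhdsWithin 0 (Ioi 0)) (nhds 0) := by
      simpa using h0.const_mul (3/64:ℝ)
    refine h1.congr' ?_
    filter_upwards [self_mem_nhdsWithin] with δ hδ
    have hδ0 : (0:ℝ) < δ := hδ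
    rw [mul_div_assoc, ← Real.rpow_sub hδ0, show (1+3*β)-(1+2*β) = β by ring]
  · intro δ hδ ξ h1ξ h2ξ
    obtain ⟨hδ0, hδh⟩ := hδ
    have hδ1 : δ < 1 := lt_trans hδh (by norm_num)
    have hπ4 : (0:ℝ) < 4*π := by positivity
    set D := δ ^ β with hDdef
    have hD0 : 0 < D := Real.rpow_pos_of_pos hδ0 β
    have hD1 : D < 1 := Real.rpow_lt_one hδ0.le hδ1 hβ
    have hE1 : δ ^ (1+β) = δ * D := by
      rw [Real.rpow_add hδ0, Real.rpow_one]
    have hE2 : δ ^ (1+2*β) = δ * D^2 := by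
      rw [show (1:ℝ)+2*β = 1+β+β by ring, Real.rpow_add hδ0, Real.rpow_add hδ0,
        Real.rpow_one]
      ring
    have hE3 : δ ^ (1+3*β) = δ * D^3 := by
      rw [show (1:ℝ)+3*β = 1+β+β+β by ring, Real.rpow_add hδ0, Real.rpow_add hδ0,
        Real.rpow_add hδ0, Real.rpow_one]
      ring
    have hsq1 : δ*D < |ξ| * (4*π) := by
      rw [← hE1]; exact (div_lt_iff₀ hπ4).1 h1ξ
    have hsq2 : |ξ| * (4*π) < δ := (lt_div_iff₀ hπ4).1 h2ξ
    have habs : (0:ℝ) ≤ |ξ| := abs_nonneg ξ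
    have hδD : (0:ℝ) < δ*D := mul_pos hδ0 hD0
    have ht1 : δ^2*D^2/4 < (2*π*ξ)^2 := by
      have h := mul_lt_mul'' hsq1 hsq1 hδD.le hδD.le
      rw [show |ξ| * (4*π) * (|ξ| * (4*π)) = 16 * π^2 * (|ξ| * |ξ|) by ring,
        abs_mul_abs_self] at h
      nlinarith [h]
    have ht2 : (2*π*ξ)^2 < δ^2/4 := by
      have h := mul_lt_mul'' hsq2 hsq2 (mul_nonneg habs hπ4.le) (mul_nonneg habs hπ4.le)
      rw [show |ξ| * (4*π) * (|ξ| * (4*π)) = 16 * π^2 * (|ξ| * |ξ|) by ring,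
        abs_mul_abs_self] at h
      nlinarith [h]
    set t := (2*π*ξ)^2/δ^2 with htdef
    have hδsq : (0:ℝ) < δ^2 := by positivity
    have ht0 : D^2/4 < t := by
      rw [htdef, lt_div_iff₀ hδsq]
      nlinarith [ht1]
    have ht4 : t < 1/4 := by
      rw [htdef, div_lt_iff₀ hδsq]
      nlinarith [ht2]
    have hbound : ‖gdel δ ξ‖ ≤ δ * (1 - t/4 + 3*t^2/16) + (1-δ) := by
      refine (gdel_norm_le hδ0 hδ1 ξ).trans ?_
      have := term1_le (s := 2*π*ξ) hδ0
      rw [← htdef] at this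
      linarith [this]
    refine hbound.trans ?_
    show δ * (1 - t/4 + 3*t^2/16) + (1-δ) ≤ 1 - δ ^ (1+2*β)/16 + 3/64 * δ ^ (1+3*β)
    rw [hE2, hE3]
    rcases le_or_gt t D with hcase | hcase
    · have h1' : (0:ℝ) ≤ δ*((t - D^2/4)*(4-3*D)) :=
        mul_nonneg hδ0.le (mul_nonneg (by linarith) (by linarith))
      have h2' : (0:ℝ) ≤ δ*(t*(D-t)) :=
        mul_nonneg hδ0.le (mul_nonneg (by positivity) (by linarith))
      linarith [h1', h2']
    · have hA : (0:ℝ) ≤ δ*(t*(1/4 - t)) :=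
        mul_nonneg hδ0.le (mul_nonneg (by positivity) (by linarith))
      have hB : (0:ℝ) ≤ δ*(D*(1-D)) :=
        mul_nonneg hδ0.le (mul_nonneg hD0.le (by linarith))
      have hCC : (0:ℝ) ≤ δ*(t-D) :=
        mul_nonneg hδ0.le (by linarith)
      have hDD : (0:ℝ) ≤ δ*D := hδD.le
      have hD3 : (0:ℝ) ≤ δ*D^3 := by positivity
      linarith [hA, hB, hCC, hDD, hD3]

end
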